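/- Let n and k be positive integers with 2k ≤ n. Then the total number, over all ordered binary trees t with n leaves, of unordered pairs {v, w} of distinct nodes of t such that the fringe subtrees t(v) and t(w) are identical as ordered trees and both have exactly k leaves, equals C_{n−2k+1}·binom(n−2k+2, 2)·C_{k−1}, where C_m denotes the m-th Catalan number. Consequently, the expected number X_{n,k}^{(2)} of such pairs in a uniformly random ordered binary tree with n leaves equals C_{n−2k+1}·binom(n−2k+2, 2)·C_{k−1}/C_{n−1}. -/

import Mathlib

open Filter Finset
open scoped Classical

/-- Ordered binary trees: every node has exactly two or no children. -/
inductive BT : Type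
  | leaf : BT
  | node : BT → BT → BT
deriving DecidableEq

namespace BT

/-- The size of a binary tree: its number of leaves. -/
def size : BT → ℕ
  | leaf => 1
  | node l r => size l + size r

/-- The multiset of all fringe subtrees of a tree (one for every node). -/
def fringe : BT → Multiset BT
  | leaf => {leaf}
  | node l r => node l r ::ₘ (fringe l + fringe r)

/-- The finset of all ordered binary trees with `n` leaves. -/
def treesOfSize : ℕ → Finset BT
  | 0 => ∅
  | 1 => {leaf}
  | n + 2 =>
    (Finset.range (n + 1)).attach.biUnion fun k =>
      ((treesOfSize (k.1 + 1)) ×ˢ (treesOfSize (n + 1 - k.1))).image fun p => node p.1 p.2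
  decreasing_by
    · have := Finset.mem_range.mp k.2; omega
    · omega

/-- Boolean test whether two ordered binary trees are isomorphic as unordered trees. -/
def isoB : BT → BT → Bool
  | leaf, leaf => true
  | leaf, node _ _ => false
  | node _ _, leaf => false
  | node l1 r1, node l2 r2 => (isoB l1 l2 && isoB r1 r2) || (isoB l1 r2 && isoB r1 l2)

/-- An injective encoding of ordered binary trees into the natural numbers. -/
def encode : BT → ℕ
  | leaf => 0
  | node l r => Nat.pair (encode l) (encode r) + 1

/-- The canonical representative of the isomorphism class of a binary tree:
two trees are isomorphic (equal as unordered trees) iff their canonical forms agree. -/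
def canon : BT → BT
  | leaf => leaf
  | node l r =>
    let l' := canon l
    let r' := canon r
    if encode l' ≤ encode r' then node l' r' else node r' l'

/-- Number of isomorphism classes of unordered binary trees represented among
the fringe subtrees of `t`. -/
def isoClasses (t : BT) : ℕ := ((fringe t).toFinset.image canon).card

/-- Number of distinct ordered binary trees occurring among the fringe subtrees of `t`. -/
def numDistinct (t : BT) : ℕ := (fringe t).toFinset.card

/-- The probability of a tree under the binary search tree model. -/
noncomputable def pbst (t : BT) : ℝ :=
  ((fringe t).map fun s => if 1 < size s then (1 : ℝ) / ((size s : ℝ) - 1) else 1).prod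

/-- Expectation of `f` under the uniform distribution on trees with `n` leaves. -/
noncomputable def unifE (n : ℕ) (f : BT → ℝ) : ℝ :=
  (∑ t ∈ treesOfSize n, f t) / (treesOfSize n).card

/-- Probability of an event under the uniform distribution on trees with `n` leaves. -/
noncomputable def unifP (n : ℕ) (p : BT → Prop) : ℝ :=
  ((treesOfSize n).filter p).card / (treesOfSize n).card

/-- Expectation of `f` under the binary search tree distribution on trees with `n` leaves. -/
noncomputable def bstE (n : ℕ) (f : BT → ℝ) : ℝ :=
  ∑ t ∈ treesOfSize n, pbst t * f t

/-- Probability of an event under the binary search tree distribution on trees with `n` leaves. -/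
noncomputable def bstP (n : ℕ) (p : BT → Prop) : ℝ :=
  ∑ t ∈ (treesOfSize n).filter p, pbst t

end BT

namespace BT

lemma size_pos (t : BT) : 0 < size t := by
  induction t with
  | leaf => simp [size]
  | node l r ihl ihr => simp [size]; omega

lemma treesOfSize_succ_succ (n : ℕ) : treesOfSize (n+2) =
    (Finset.range (n + 1)).attach.biUnion fun k =>
      ((treesOfSize (k.1 + 1)) ×ˢ (treesOfSize (n + 1 - k.1))).image fun p => node p.1 p.2 := by
  rw [treesOfSize]

lemma mem_treesOfSize : ∀ (n : ℕ) (t : BT), t ∈ treesOfSize n ↔ size t = n := by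
  intro n
  induction n using Nat.strong_induction_on with
  | _ n ih =>
    match n with
    | 0 => intro t; simp [treesOfSize]; have := size_pos t; omega
    | 1 => intro t; cases t with
           | leaf => simp [treesOfSize, size]
           | node l r => simp [treesOfSize, size]
                         have := size_pos l; have := size_pos r; omega
    | (n+2) =>
      intro t
      rw [treesOfSize_succ_succ]
      simp only [Finset.mem_biUnion, Finset.mem_attach, Finset.mem_image, Finset.mem_product,
        true_and, Subtype.exists, Finset.mem_range]
      constructor
      · rintro ⟨k, hk, ⟨l, r⟩, ⟨hl, hr⟩, rfl⟩
        rw [ih (k+1) (by omega) l] at hl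
        rw [ih (n+1-k) (by omega) r] at hr
        simp [size]; omega
      · intro ht
        cases t with
        | leaf => simp [size] at ht
        | node l r =>
          simp only [size] at ht
          have hl := size_pos l; have hr := size_pos r
          refine ⟨size l - 1, by omega, ⟨l, r⟩, ⟨?_, ?_⟩, rfl⟩
          · rw [ih _ (by omega)]; show size l = _; omega
          · rw [ih _ (by omega)]; show size r = _; omega

lemma sum_treesOfSize {M : Type*} [AddCommMonoid M] (n : ℕ) (f : BT → M) :
    ∑ t ∈ treesOfSize (n+2), f t
      = ∑ b ∈ Finset.range (n+1), ∑ l ∈ treesOfSize (b+1),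
          ∑ r ∈ treesOfSize (n+1-b), f (node l r) := by
  have hdisj : (↑(Finset.range (n+1)).attach : Set {x // x ∈ Finset.range (n+1)}).PairwiseDisjoint
      (fun k : {x // x ∈ Finset.range (n+1)} =>
        ((treesOfSize (k.1 + 1)) ×ˢ (treesOfSize (n + 1 - k.1))).image fun p => node p.1 p.2) := by
    intro k1 _ k2 _ hne
    simp only [Function.onFun, Finset.disjoint_left]
    intro t ht1 ht2
    simp only [Finset.mem_image, Finset.mem_product] at ht1 ht2
    obtain ⟨⟨l1, r1⟩, ⟨hl1, _⟩, rfl⟩ := ht1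
    obtain ⟨⟨l2, r2⟩, ⟨hl2, _⟩, h⟩ := ht2
    have e1 : size l1 = (k1 : ℕ) + 1 := (mem_treesOfSize _ _).mp hl1
    have e2 : size l2 = (k2 : ℕ) + 1 := (mem_treesOfSize _ _).mp hl2
    injection h with h1 _
    subst h1
    simp only at e1 e2
    exact hne (Subtype.ext (by omega))
  rw [treesOfSize_succ_succ, Finset.sum_biUnion hdisj]
  have key : ∀ k : {x // x ∈ Finset.range (n+1)},
      (∑ t ∈ ((treesOfSize (k.1+1)) ×ˢ treesOfSize (n+1-k.1)).image (fun p => node p.1 p.2), f t)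
        = ∑ l ∈ treesOfSize (k.1+1), ∑ r ∈ treesOfSize (n+1-k.1), f (node l r) := by
    intro k
    rw [Finset.sum_image, Finset.sum_product]
    intro p _ q _ h
    injection h with h1 h2
    exact Prod.ext h1 h2
  rw [Finset.sum_congr rfl (fun k _ => key k)]
  exact Finset.sum_attach (Finset.range (n+1))
    (fun b => ∑ l ∈ treesOfSize (b+1), ∑ r ∈ treesOfSize (n+1-b), f (node l r))
lemma card_treesOfSize : ∀ n : ℕ, (treesOfSize (n+1)).card = catalan n := by
  intro n
  induction n using Nat.strong_induction_on with
  | _ n ih =>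
    cases n with
    | zero => simp [treesOfSize]
    | succ m =>
      have h0 : (treesOfSize (m+2)).card = ∑ t ∈ treesOfSize (m+2), (1:ℕ) := by simp
      rw [h0]
      rw [sum_treesOfSize m (fun _ => (1:ℕ))]
      rw [catalan_succ', Finset.Nat.sum_antidiagonal_eq_sum_range_succ_mk]
      apply Finset.sum_congr rfl
      intro b hb
      simp only [Finset.mem_range] at hb
      have h1 : (treesOfSize (b+1)).card = catalan b := ih b (by omega)
      have h2 : (treesOfSize (m+1-b)).card = catalan (m-b) := by
        have h3 : m+1-b = (m-b)+1 := by omega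
        rw [h3]; exact ih (m-b) (by omega)
      simp [h1, h2]
lemma size_le_of_mem_fringe {u t : BT} (h : u ∈ fringe t) : size u ≤ size t := by
  induction t with
  | leaf => simp [fringe] at h; subst h; exact le_refl _
  | node l r ihl ihr =>
    simp only [fringe, Multiset.mem_cons, Multiset.mem_add] at h
    rcases h with h | h | h
    · subst h; exact le_refl _
    · have := ihl h; simp [size]; omega
    · have := ihr h; simp [size]; omega

lemma count_fringe_eq_zero {s t : BT} (h : size t < size s) : (fringe t).count s = 0 := by
  rw [Multiset.count_eq_zero]
  intro hmem
  exact absurd (size_le_of_mem_fringe hmem) (by omega)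

lemma count_fringe_node (l r s : BT) :
    (fringe (node l r)).count s
      = (if node l r = s then 1 else 0) + ((fringe l).count s + (fringe r).count s) := by
  simp [fringe, Multiset.count_cons, Multiset.count_add]
  split <;> split <;> simp_all <;> omega

lemma count_fringe_of_size_le {s t : BT} (h : size t ≤ size s) :
    (fringe t).count s = if t = s then 1 else 0 := by
  cases t with
  | leaf =>
    simp [fringe, Multiset.count_singleton]
    split <;> simp_all [eq_comm]
  | node l r =>
    rw [count_fringe_node]
    have hl : size l < size s := by have := size_pos r; simp [size] at h; omega
    have hr : size r < size s := by have := size_pos l; simp [size] at h; omega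
    rw [count_fringe_eq_zero hl, count_fringe_eq_zero hr]
    simp

lemma count_fringe_le_one {s t : BT} (h : size t < 2 * size s) : (fringe t).count s ≤ 1 := by
  induction t with
  | leaf =>
    simp [fringe, Multiset.count_singleton]
    split <;> omega
  | node l r ihl ihr =>
    rw [count_fringe_node]
    by_cases he : node l r = s
    · have hsz : size (node l r) = size s := by rw [he]
      have hl : size l < size s := by have := size_pos r; simp [size] at hsz ⊢; omega
      have hr : size r < size s := by have := size_pos l; simp [size] at hsz ⊢; omega
      rw [count_fringe_eq_zero hl, count_fringe_eq_zero hr]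
      simp [he]
    · rw [if_neg he, zero_add]
      simp only [size] at h
      by_cases hl : size l < size s
      · rw [count_fringe_eq_zero hl]
        have h2 : size r < 2 * size s := by have := size_pos l; omega
        simpa using ihr h2
      · have h3 : size r < size s := by omega
        rw [count_fringe_eq_zero h3]
        have h2 : size l < 2 * size s := by have := size_pos r; omega
        simpa using ihl h2

/-! ### Auxiliary sums -/

/-- Sum of sizes over all trees of a given size. -/
def Lsum (m : ℕ) : ℕ := ∑ t ∈ treesOfSize m, size t

/-- Sum of `choose (size t) 2` over all trees of a given size. -/
def Psum (m : ℕ) : ℕ := ∑ t ∈ treesOfSize m, Nat.choose (size t) 2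

/-- Total number of occurrences of `s` as a fringe subtree over trees of a given size. -/
def Gsum (s : BT) (a : ℕ) : ℕ := ∑ t ∈ treesOfSize a, (fringe t).count s

lemma Lsum_closed (m : ℕ) : Lsum m = m * (treesOfSize m).card := by
  unfold Lsum
  rw [Finset.sum_congr rfl (fun t ht => (mem_treesOfSize m t).mp ht), Finset.sum_const,
    smul_eq_mul, mul_comm]

lemma Psum_closed (m : ℕ) : Psum m = Nat.choose m 2 * (treesOfSize m).card := by
  unfold Psum
  rw [Finset.sum_congr rfl (fun t ht => by rw [(mem_treesOfSize m t).mp ht]), Finset.sum_const,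
    smul_eq_mul, mul_comm]

lemma Lsum_one : Lsum 1 = 1 := by simp [Lsum, treesOfSize, size]

lemma sum_sum_add (b c : ℕ) (u v : BT → ℕ) :
    ∑ l ∈ treesOfSize b, ∑ r ∈ treesOfSize c, (u l + v r)
      = (treesOfSize c).card * (∑ l ∈ treesOfSize b, u l)
        + (treesOfSize b).card * (∑ r ∈ treesOfSize c, v r) := by
  have h1 : ∀ l, ∑ r ∈ treesOfSize c, (u l + v r)
      = (treesOfSize c).card * u l + ∑ r ∈ treesOfSize c, v r := by
    intro l
    rw [Finset.sum_add_distrib, Finset.sum_const, smul_eq_mul]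
  rw [Finset.sum_congr rfl (fun l _ => h1 l), Finset.sum_add_distrib, Finset.sum_const,
    smul_eq_mul, ← Finset.mul_sum]

lemma choose_two_add (x y : ℕ) :
    Nat.choose (x + y) 2 = Nat.choose x 2 + Nat.choose y 2 + x * y := by
  induction y with
  | zero => simp
  | succ y ih =>
    have h1 : ∀ n : ℕ, Nat.choose (n + 1) 2 = n + Nat.choose n 2 := by
      intro n
      rw [Nat.choose_succ_succ]
      simp [Nat.choose_one_right]
    have h2 : x + (y + 1) = (x + y) + 1 := by omega
    rw [h2, h1, ih, h1]
    ring

/-- Shift lemma for range sums of guarded terms. -/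
lemma sum_shift (c N : ℕ) (f : ℕ → ℕ) :
    ∑ b ∈ Finset.range N, (if c ≤ b then f (b - c) else 0)
      = ∑ j ∈ Finset.range (N - c), f j := by
  induction N with
  | zero => simp
  | succ N ih =>
    rw [Finset.sum_range_succ, ih]
    by_cases h : c ≤ N
    · have h2 : N + 1 - c = (N - c) + 1 := by omega
      rw [if_pos h, h2, Finset.sum_range_succ]
    · have h2 : N + 1 - c = 0 := by omega
      have h3 : N - c = 0 := by omega
      rw [if_neg h, h2, h3, add_zero]

/-- Truncation lemma for range sums of terms vanishing beyond `M`. -/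
lemma sum_trunc (M N : ℕ) (h : M ≤ N) (f : ℕ → ℕ) (hf : ∀ b, M ≤ b → f b = 0) :
    ∑ b ∈ Finset.range N, f b = ∑ b ∈ Finset.range M, f b := by
  refine (Finset.sum_subset (Finset.range_subset_range.mpr h) ?_).symm
  intro x _ hx
  exact hf x (by simpa using Finset.mem_range.not.mp hx)

lemma Lsum_rec (n : ℕ) : Lsum (n+2)
    = ∑ b ∈ Finset.range (n+1),
        ((treesOfSize (n+1-b)).card * Lsum (b+1) + (treesOfSize (b+1)).card * Lsum (n+1-b)) := by
  unfold Lsum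
  rw [sum_treesOfSize n size]
  refine Finset.sum_congr rfl fun b _ => ?_
  have h : ∀ l ∈ treesOfSize (b+1), ∀ r ∈ treesOfSize (n+1-b),
      size (node l r) = size l + size r := fun _ _ _ _ => rfl
  rw [Finset.sum_congr rfl (fun l hl => Finset.sum_congr rfl (fun r hr => h l hl r hr))]
  exact sum_sum_add _ _ _ _

lemma Gsum_eq {k : ℕ} {s : BT} (hs : s ∈ treesOfSize k) :
    ∀ a, Gsum s a = if k ≤ a then Lsum (a+1-k) else 0 := by
  have hsk : size s = k := (mem_treesOfSize k s).mp hs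
  have hk1 : 1 ≤ k := hsk ▸ size_pos s
  intro a
  induction a using Nat.strong_induction_on with
  | _ a ih =>
    by_cases hlt : a < k
    · rw [if_neg (by omega)]
      unfold Gsum
      refine Finset.sum_eq_zero fun t ht => ?_
      have : size t = a := (mem_treesOfSize a t).mp ht
      exact count_fringe_eq_zero (by omega)
    · by_cases heq : a = k
      · subst heq
        rw [if_pos le_rfl]
        have h1 : a + 1 - a = 1 := by omega
        rw [h1, Lsum_one]
        unfold Gsum
        have h2 : ∀ t ∈ treesOfSize a, (fringe t).count s = if t = s then 1 else 0 := by
          intro t ht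
          exact count_fringe_of_size_le (by rw [hsk, (mem_treesOfSize a t).mp ht])
        rw [Finset.sum_congr rfl h2, Finset.sum_ite_eq' (treesOfSize a) s (fun _ => 1),
          if_pos hs]
      · -- k < a, so a = n + 2 for some n
        have hka : k < a := by omega
        obtain ⟨n, rfl⟩ : ∃ n, a = n + 2 := ⟨a - 2, by omega⟩
        have hkn : k ≤ n + 1 := by omega
        set q := n + 1 - k with hq
        -- step 1 : recurrence for Gsum
        have step1 : Gsum s (n+2) = ∑ b ∈ Finset.range (n+1),
            ((treesOfSize (n+1-b)).card * Gsum s (b+1)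
              + (treesOfSize (b+1)).card * Gsum s (n+1-b)) := by
          unfold Gsum
          rw [sum_treesOfSize n (fun t => (fringe t).count s)]
          refine Finset.sum_congr rfl fun b hb => ?_
          have h : ∀ l ∈ treesOfSize (b+1), ∀ r ∈ treesOfSize (n+1-b),
              (fringe (node l r)).count s = (fringe l).count s + (fringe r).count s := by
            intro l hl r hr
            rw [count_fringe_node, if_neg, zero_add]
            intro he
            have e1 : size l = b + 1 := (mem_treesOfSize _ _).mp hl
            have e2 : size r = n + 1 - b := (mem_treesOfSize _ _).mp hr
            have e3 : size (node l r) = size s := by rw [he]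
            have hb' : b < n + 1 := Finset.mem_range.mp hb
            simp only [size] at e3
            omega
          rw [Finset.sum_congr rfl (fun l hl => Finset.sum_congr rfl (fun r hr => h l hl r hr))]
          exact sum_sum_add _ _ _ _
        -- step 2 : apply induction hypothesis
        have step2 : Gsum s (n+2) = ∑ b ∈ Finset.range (n+1),
            ((treesOfSize (n+1-b)).card * (if k ≤ b+1 then Lsum (b+1+1-k) else 0)
              + (treesOfSize (b+1)).card * (if k ≤ n+1-b then Lsum (n+1-b+1-k) else 0)) := by
          rw [step1]
          refine Finset.sum_congr rfl fun b hb => ?_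
          rw [ih (b+1) (by have := Finset.mem_range.mp hb; omega),
            ih (n+1-b) (by have := Finset.mem_range.mp hb; omega)]
        rw [step2, Finset.sum_add_distrib, if_pos (by omega : k ≤ n+2)]
        -- first half
        have half1 : ∑ b ∈ Finset.range (n+1),
            (treesOfSize (n+1-b)).card * (if k ≤ b+1 then Lsum (b+1+1-k) else 0)
            = ∑ j ∈ Finset.range (q+1), (treesOfSize (q+1-j)).card * Lsum (j+1) := by
          have e : ∀ b ∈ Finset.range (n+1),
              (treesOfSize (n+1-b)).card * (if k ≤ b+1 then Lsum (b+1+1-k) else 0)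
                = if k-1 ≤ b then
                    (fun j => (treesOfSize (q+1-j)).card * Lsum (j+1)) (b - (k-1)) else 0 := by
            intro b hb
            have hb' : b < n + 1 := Finset.mem_range.mp hb
            by_cases hcb : k ≤ b + 1
            · rw [if_pos hcb, if_pos (by omega)]
              have e1 : n+1-b = q+1-(b-(k-1)) := by omega
              have e2 : b+1+1-k = b-(k-1)+1 := by omega
              rw [e1, e2]
            · rw [if_neg hcb, if_neg (by omega), mul_zero]
          rw [Finset.sum_congr rfl e, sum_shift (k-1) (n+1)
            (fun j => (treesOfSize (q+1-j)).card * Lsum (j+1))]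
          have : n + 1 - (k-1) = q + 1 := by omega
          rw [this]
        -- second half
        have half2 : ∑ b ∈ Finset.range (n+1),
            (treesOfSize (b+1)).card * (if k ≤ n+1-b then Lsum (n+1-b+1-k) else 0)
            = ∑ b ∈ Finset.range (q+1), (treesOfSize (b+1)).card * Lsum (q+1-b) := by
          rw [sum_trunc (q+1) (n+1) (by omega)
            (fun b => (treesOfSize (b+1)).card * (if k ≤ n+1-b then Lsum (n+1-b+1-k) else 0))
            (fun b hbq => by
              show (treesOfSize (b+1)).card * (if k ≤ n+1-b then Lsum (n+1-b+1-k) else 0) = 0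
              rw [if_neg (by omega), mul_zero])]
          refine Finset.sum_congr rfl fun b hb => ?_
          have hb' : b < q + 1 := Finset.mem_range.mp hb
          rw [if_pos (by omega)]
          have e1 : n+1-b+1-k = q+1-b := by omega
          rw [e1]
        rw [half1, half2]
        have e2 : n + 2 + 1 - k = q + 2 := by omega
        rw [e2, Lsum_rec q, Finset.sum_add_distrib]

lemma Psum_rec (q : ℕ) : Psum (q+2)
    = ∑ b ∈ Finset.range (q+1),
        ((treesOfSize (q+1-b)).card * Psum (b+1) + (treesOfSize (b+1)).card * Psum (q+1-b)
          + Lsum (b+1) * Lsum (q+1-b)) := by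
  unfold Psum
  rw [sum_treesOfSize q (fun t => Nat.choose (size t) 2)]
  refine Finset.sum_congr rfl fun b _ => ?_
  have h : ∀ l ∈ treesOfSize (b+1), ∀ r ∈ treesOfSize (q+1-b),
      Nat.choose (size (node l r)) 2
        = (Nat.choose (size l) 2 + Nat.choose (size r) 2) + size l * size r := by
    intro l _ r _
    show Nat.choose (size l + size r) 2 = _
    rw [choose_two_add]
  rw [Finset.sum_congr rfl (fun l hl => Finset.sum_congr rfl (fun r hr => h l hl r hr))]
  have split : ∑ l ∈ treesOfSize (b+1), ∑ r ∈ treesOfSize (q+1-b),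
      ((Nat.choose (size l) 2 + Nat.choose (size r) 2) + size l * size r)
      = (∑ l ∈ treesOfSize (b+1), ∑ r ∈ treesOfSize (q+1-b),
          (Nat.choose (size l) 2 + Nat.choose (size r) 2))
        + ∑ l ∈ treesOfSize (b+1), ∑ r ∈ treesOfSize (q+1-b), size l * size r := by
    rw [← Finset.sum_add_distrib]
    refine Finset.sum_congr rfl fun l _ => ?_
    rw [← Finset.sum_add_distrib]
  rw [split, sum_sum_add, ← Finset.sum_mul_sum]
  rfl

/-- The central quantity: total over trees of size `n` and shapes of size `k` of
the number of pairs of identical occurrences. -/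
def Fsum (k n : ℕ) : ℕ :=
  ∑ t ∈ treesOfSize n, ∑ s ∈ treesOfSize k, Nat.choose ((fringe t).count s) 2

lemma Fsum_eq {k : ℕ} (hk : 0 < k) :
    ∀ n, Fsum k n = if 2*k ≤ n then (treesOfSize k).card * Psum (n+2-2*k) else 0 := by
  intro n
  induction n using Nat.strong_induction_on with
  | _ n ih =>
    by_cases hlt : n < 2*k
    · rw [if_neg (by omega)]
      unfold Fsum
      refine Finset.sum_eq_zero fun t ht => Finset.sum_eq_zero fun s hs => ?_
      have h1 : size t = n := (mem_treesOfSize n t).mp ht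
      have h2 : size s = k := (mem_treesOfSize k s).mp hs
      have h3 : (fringe t).count s ≤ 1 := count_fringe_le_one (by omega)
      exact Nat.choose_eq_zero_of_lt (by omega)
    · have h2k : 2*k ≤ n := by omega
      obtain ⟨m, rfl⟩ : ∃ m, n = m + 2 := ⟨n - 2, by omega⟩
      have hkm : 2*k ≤ m + 2 := h2k
      set q := m + 2 - 2*k with hq
      -- Step 1: recurrence
      have step1 : Fsum k (m+2) = ∑ b ∈ Finset.range (m+1),
          ((treesOfSize (m+1-b)).card * Fsum k (b+1)
            + (treesOfSize (b+1)).card * Fsum k (m+1-b)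
            + (treesOfSize k).card * ((if k ≤ b+1 then Lsum (b+1+1-k) else 0)
                * (if k ≤ m+1-b then Lsum (m+1-b+1-k) else 0))) := by
        unfold Fsum
        rw [sum_treesOfSize m (fun t => ∑ s ∈ treesOfSize k, Nat.choose ((fringe t).count s) 2)]
        refine Finset.sum_congr rfl fun b hb => ?_
        have hb' : b < m + 1 := Finset.mem_range.mp hb
        -- rewrite the inner summand
        have h : ∀ l ∈ treesOfSize (b+1), ∀ r ∈ treesOfSize (m+1-b),
            (∑ s ∈ treesOfSize k, Nat.choose ((fringe (node l r)).count s) 2)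
              = ((∑ s ∈ treesOfSize k, Nat.choose ((fringe l).count s) 2)
                  + (∑ s ∈ treesOfSize k, Nat.choose ((fringe r).count s) 2))
                + ∑ s ∈ treesOfSize k, (fringe l).count s * (fringe r).count s := by
          intro l hl r hr
          have hcount : ∀ s ∈ treesOfSize k,
              (fringe (node l r)).count s = (fringe l).count s + (fringe r).count s := by
            intro s hs
            rw [count_fringe_node, if_neg, zero_add]
            intro he
            have e1 : size l = b + 1 := (mem_treesOfSize _ _).mp hl
            have e2 : size r = m + 1 - b := (mem_treesOfSize _ _).mp hr
            have e3 : size (node l r) = size s := by rw [he]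
            have e4 : size s = k := (mem_treesOfSize _ _).mp hs
            simp only [size] at e3
            omega
          rw [← Finset.sum_add_distrib, ← Finset.sum_add_distrib]
          refine Finset.sum_congr rfl fun s hs => ?_
          rw [hcount s hs, choose_two_add]
        rw [Finset.sum_congr rfl (fun l hl => Finset.sum_congr rfl (fun r hr => h l hl r hr))]
        have split : ∑ l ∈ treesOfSize (b+1), ∑ r ∈ treesOfSize (m+1-b),
            (((∑ s ∈ treesOfSize k, Nat.choose ((fringe l).count s) 2)
              + (∑ s ∈ treesOfSize k, Nat.choose ((fringe r).count s) 2))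
              + ∑ s ∈ treesOfSize k, (fringe l).count s * (fringe r).count s)
            = (∑ l ∈ treesOfSize (b+1), ∑ r ∈ treesOfSize (m+1-b),
                ((∑ s ∈ treesOfSize k, Nat.choose ((fringe l).count s) 2)
                  + (∑ s ∈ treesOfSize k, Nat.choose ((fringe r).count s) 2)))
              + ∑ l ∈ treesOfSize (b+1), ∑ r ∈ treesOfSize (m+1-b),
                  ∑ s ∈ treesOfSize k, (fringe l).count s * (fringe r).count s := by
          rw [← Finset.sum_add_distrib]
          refine Finset.sum_congr rfl fun l _ => ?_
          rw [← Finset.sum_add_distrib]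
        rw [split, sum_sum_add]
        have cross : ∑ l ∈ treesOfSize (b+1), ∑ r ∈ treesOfSize (m+1-b),
            ∑ s ∈ treesOfSize k, (fringe l).count s * (fringe r).count s
            = (treesOfSize k).card * ((if k ≤ b+1 then Lsum (b+1+1-k) else 0)
                * (if k ≤ m+1-b then Lsum (m+1-b+1-k) else 0)) := by
          have sw1 : ∀ l, ∑ r ∈ treesOfSize (m+1-b), ∑ s ∈ treesOfSize k,
              (fringe l).count s * (fringe r).count s
              = ∑ s ∈ treesOfSize k, ∑ r ∈ treesOfSize (m+1-b),
                  (fringe l).count s * (fringe r).count s := fun l => Finset.sum_comm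
          rw [Finset.sum_congr rfl (fun l _ => sw1 l), Finset.sum_comm]
          have inner : ∀ s ∈ treesOfSize k,
              ∑ l ∈ treesOfSize (b+1), ∑ r ∈ treesOfSize (m+1-b),
                (fringe l).count s * (fringe r).count s
              = (if k ≤ b+1 then Lsum (b+1+1-k) else 0)
                  * (if k ≤ m+1-b then Lsum (m+1-b+1-k) else 0) := by
            intro s hs
            rw [← Finset.sum_mul_sum]
            show Gsum s (b+1) * Gsum s (m+1-b) = _
            rw [Gsum_eq hs, Gsum_eq hs]
          rw [Finset.sum_congr rfl inner, Finset.sum_const, smul_eq_mul]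
        rw [cross]
      -- Step 2: apply the induction hypothesis
      have step2 : Fsum k (m+2) = ∑ b ∈ Finset.range (m+1),
          ((treesOfSize (m+1-b)).card
              * (if 2*k ≤ b+1 then (treesOfSize k).card * Psum (b+1+2-2*k) else 0)
            + (treesOfSize (b+1)).card
              * (if 2*k ≤ m+1-b then (treesOfSize k).card * Psum (m+1-b+2-2*k) else 0)
            + (treesOfSize k).card * ((if k ≤ b+1 then Lsum (b+1+1-k) else 0)
                * (if k ≤ m+1-b then Lsum (m+1-b+1-k) else 0))) := by
        rw [step1]
        refine Finset.sum_congr rfl fun b hb => ?_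
        have hb' : b < m + 1 := Finset.mem_range.mp hb
        rw [ih (b+1) (by omega), ih (m+1-b) (by omega)]
      -- Pieces
      have pieceA : ∑ b ∈ Finset.range (m+1),
          (treesOfSize (m+1-b)).card
            * (if 2*k ≤ b+1 then (treesOfSize k).card * Psum (b+1+2-2*k) else 0)
          = (treesOfSize k).card
              * ∑ b ∈ Finset.range (q+1), (treesOfSize (q+1-b)).card * Psum (b+1) := by
        have e : ∀ b ∈ Finset.range (m+1),
            (treesOfSize (m+1-b)).card
              * (if 2*k ≤ b+1 then (treesOfSize k).card * Psum (b+1+2-2*k) else 0)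
            = if 2*k-1 ≤ b then
                (fun j => (treesOfSize k).card * ((treesOfSize (q-j)).card * Psum (j+2)))
                  (b - (2*k-1)) else 0 := by
          intro b hb
          have hb' : b < m + 1 := Finset.mem_range.mp hb
          by_cases hcb : 2*k ≤ b + 1
          · rw [if_pos hcb, if_pos (by omega)]
            have e1 : m+1-b = q-(b-(2*k-1)) := by omega
            have e2 : b+1+2-2*k = b-(2*k-1)+2 := by omega
            rw [e1, e2]
            ring
          · rw [if_neg hcb, if_neg (by omega), mul_zero]
        rw [Finset.sum_congr rfl e, sum_shift (2*k-1) (m+1)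
          (fun j => (treesOfSize k).card * ((treesOfSize (q-j)).card * Psum (j+2)))]
        have eN : m + 1 - (2*k-1) = q := by omega
        rw [eN, Finset.mul_sum]
        rw [Finset.sum_range_succ']
        have e0 : Psum 1 = 0 := by rw [Psum_closed]; simp
        rw [e0]
        simp only [mul_zero, add_zero]
        refine Finset.sum_congr rfl fun j _ => ?_
        have e1 : q + 1 - (j + 1) = q - j := by omega
        rw [e1]
      have pieceB : ∑ b ∈ Finset.range (m+1),
          (treesOfSize (b+1)).card
            * (if 2*k ≤ m+1-b then (treesOfSize k).card * Psum (m+1-b+2-2*k) else 0)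
          = (treesOfSize k).card
              * ∑ b ∈ Finset.range (q+1), (treesOfSize (b+1)).card * Psum (q+1-b) := by
        rw [sum_trunc q (m+1) (by omega)
          (fun b => (treesOfSize (b+1)).card
            * (if 2*k ≤ m+1-b then (treesOfSize k).card * Psum (m+1-b+2-2*k) else 0))
          (fun b hbq => by
            show (treesOfSize (b+1)).card
              * (if 2*k ≤ m+1-b then (treesOfSize k).card * Psum (m+1-b+2-2*k) else 0) = 0
            rw [if_neg (by omega), mul_zero])]
        rw [Finset.mul_sum, Finset.sum_range_succ]
        have e0 : Psum (q+1-q) = 0 := by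
          have : q + 1 - q = 1 := by omega
          rw [this, Psum_closed]; simp
        rw [e0]
        simp only [mul_zero, add_zero]
        refine Finset.sum_congr rfl fun b hb => ?_
        have hb' : b < q := Finset.mem_range.mp hb
        rw [if_pos (by omega)]
        have e1 : m+1-b+2-2*k = q+1-b := by omega
        rw [e1]
        ring
      have pieceC : ∑ b ∈ Finset.range (m+1),
          (treesOfSize k).card * ((if k ≤ b+1 then Lsum (b+1+1-k) else 0)
            * (if k ≤ m+1-b then Lsum (m+1-b+1-k) else 0))
          = (treesOfSize k).card
              * ∑ b ∈ Finset.range (q+1), Lsum (b+1) * Lsum (q+1-b) := by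
        rw [sum_trunc (m+2-k) (m+1) (by omega)
          (fun b => (treesOfSize k).card * ((if k ≤ b+1 then Lsum (b+1+1-k) else 0)
            * (if k ≤ m+1-b then Lsum (m+1-b+1-k) else 0)))
          (fun b hbq => by
            show (treesOfSize k).card * ((if k ≤ b+1 then Lsum (b+1+1-k) else 0)
              * (if k ≤ m+1-b then Lsum (m+1-b+1-k) else 0)) = 0
            rw [if_neg (show ¬ k ≤ m+1-b by omega), mul_zero, mul_zero])]
        have e : ∀ b ∈ Finset.range (m+2-k),
            (treesOfSize k).card * ((if k ≤ b+1 then Lsum (b+1+1-k) else 0)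
              * (if k ≤ m+1-b then Lsum (m+1-b+1-k) else 0))
            = if k-1 ≤ b then
                (fun j => (treesOfSize k).card * (Lsum (j+1) * Lsum (q+1-j))) (b-(k-1))
              else 0 := by
          intro b hb
          have hb' : b < m + 2 - k := Finset.mem_range.mp hb
          by_cases hcb : k ≤ b + 1
          · rw [if_pos hcb, if_pos (by omega), if_pos (by omega)]
            have e1 : b+1+1-k = b-(k-1)+1 := by omega
            have e2 : m+1-b+1-k = q+1-(b-(k-1)) := by omega
            rw [e1, e2]
          · rw [if_neg hcb, zero_mul, mul_zero, if_neg (show ¬ k-1 ≤ b by omega)]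
        rw [Finset.sum_congr rfl e, sum_shift (k-1) (m+2-k)
          (fun j => (treesOfSize k).card * (Lsum (j+1) * Lsum (q+1-j)))]
        have eN : m+2-k - (k-1) = q+1 := by omega
        rw [eN, Finset.mul_sum]
      -- Assemble
      rw [step2, if_pos h2k]
      have esplit : ∑ b ∈ Finset.range (m+1),
          ((treesOfSize (m+1-b)).card
              * (if 2*k ≤ b+1 then (treesOfSize k).card * Psum (b+1+2-2*k) else 0)
            + (treesOfSize (b+1)).card
              * (if 2*k ≤ m+1-b then (treesOfSize k).card * Psum (m+1-b+2-2*k) else 0)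
            + (treesOfSize k).card * ((if k ≤ b+1 then Lsum (b+1+1-k) else 0)
                * (if k ≤ m+1-b then Lsum (m+1-b+1-k) else 0)))
          = (∑ b ∈ Finset.range (m+1), (treesOfSize (m+1-b)).card
              * (if 2*k ≤ b+1 then (treesOfSize k).card * Psum (b+1+2-2*k) else 0))
            + (∑ b ∈ Finset.range (m+1), (treesOfSize (b+1)).card
              * (if 2*k ≤ m+1-b then (treesOfSize k).card * Psum (m+1-b+2-2*k) else 0))
            + ∑ b ∈ Finset.range (m+1), (treesOfSize k).card
                * ((if k ≤ b+1 then Lsum (b+1+1-k) else 0)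
                  * (if k ≤ m+1-b then Lsum (m+1-b+1-k) else 0)) := by
        rw [Finset.sum_add_distrib, Finset.sum_add_distrib]
      rw [esplit, pieceA, pieceB, pieceC]
      have eQ : m + 2 + 2 - 2*k = q + 2 := by omega
      rw [eQ, Psum_rec q]
      simp only [Finset.mul_sum]
      rw [← Finset.sum_add_distrib, ← Finset.sum_add_distrib]
      refine Finset.sum_congr rfl fun b _ => ?_
      ring

end BT

open BT in
/-- For positive integers `n, k` with `2k ≤ n`, the total number, over all
ordered binary trees `t` with `n` leaves, of unordered pairs of distinct nodes whose
fringe subtrees are identical as ordered trees and have exactly `k` leaves equals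
`C_{n−2k+1}·binom(n−2k+2, 2)·C_{k−1}`; consequently the expected number of such pairs in
a uniformly random ordered binary tree with `n` leaves equals
`C_{n−2k+1}·binom(n−2k+2, 2)·C_{k−1}/C_{n−1}`. -/
theorem total_identical_fringe_pairs_uniform
    (n k : ℕ) (hk : 0 < k) (hkn : 2 * k ≤ n) :
    (∑ t ∈ treesOfSize n, ∑ s ∈ treesOfSize k, Nat.choose ((fringe t).count s) 2)
        = catalan (n - 2 * k + 1) * Nat.choose (n - 2 * k + 2) 2 * catalan (k - 1) ∧
    (∑ t ∈ treesOfSize n,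
        ∑ s ∈ treesOfSize k, (Nat.choose ((fringe t).count s) 2 : ℝ)) / (catalan (n - 1) : ℝ)
      = (catalan (n - 2 * k + 1) * Nat.choose (n - 2 * k + 2) 2 * catalan (k - 1) : ℝ)
          / (catalan (n - 1) : ℝ) := by
  have hF := Fsum_eq hk n
  rw [if_pos hkn] at hF
  have hFs : (∑ t ∈ treesOfSize n, ∑ s ∈ treesOfSize k,
      Nat.choose ((fringe t).count s) 2) = Fsum k n := rfl
  have hcT : (treesOfSize k).card = catalan (k-1) := by
    obtain ⟨k', rfl⟩ : ∃ k', k = k'+1 := ⟨k-1, by omega⟩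
    simpa using card_treesOfSize k'
  have hP : Psum (n+2-2*k) = Nat.choose (n-2*k+2) 2 * catalan (n-2*k+1) := by
    rw [Psum_closed]
    have e1 : n+2-2*k = (n-2*k+1)+1 := by omega
    rw [e1, card_treesOfSize]
  have part1 : (∑ t ∈ treesOfSize n, ∑ s ∈ treesOfSize k,
      Nat.choose ((fringe t).count s) 2)
      = catalan (n - 2*k + 1) * Nat.choose (n - 2*k + 2) 2 * catalan (k - 1) := by
    rw [hFs, hF, hcT, hP]; ring
  refine ⟨part1, ?_⟩
  have cast1 : (∑ t ∈ treesOfSize n, ∑ s ∈ treesOfSize k,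
      (Nat.choose ((fringe t).count s) 2 : ℝ))
      = ((∑ t ∈ treesOfSize n, ∑ s ∈ treesOfSize k,
          Nat.choose ((fringe t).count s) 2 : ℕ) : ℝ) := by
    push_cast
    rfl
  rw [cast1, part1]
  push_cast
  ring
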